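/- For constants c > 0, α₀ ∈ (0,1), and α_c with 0 < α_c < α₀, the function ũ(a) defined by ũ(a) = ((α₀/2 - 1/(2α₀))·a² - (1/α₀)·a)·c for a ∈ [-1,0] and ũ(a) = -(a/(α₀ - α_c·a))·c for a ∈ (0,1] is strictly concave on [-1,1]. -/

import Mathlib

/-- The auxiliary function ũ is strictly concave on [-1,1]. -/
theorem util_strictConcave (α₀ αc c : ℝ) (hα₀ : α₀ ∈ Set.Ioo (0:ℝ) 1)
    (hαc : 0 < αc) (hcα : αc < α₀) (hc : 0 < c) :
    StrictConcaveOn ℝ (Set.Icc (-1 : ℝ) 1)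
      (fun a : ℝ => if a ≤ 0 then ((α₀ / 2 - 1 / (2 * α₀)) * a ^ 2 - (1 / α₀) * a) * c
        else -(a / (α₀ - αc * a)) * c) := by
  obtain ⟨hα0, hα1⟩ := hα₀
  set f : ℝ → ℝ := fun a : ℝ => if a ≤ 0 then ((α₀ / 2 - 1 / (2 * α₀)) * a ^ 2 - (1 / α₀) * a) * c
        else -(a / (α₀ - αc * a)) * c with hf
  set fL : ℝ → ℝ := fun a => ((α₀ / 2 - 1 / (2 * α₀)) * a ^ 2 - (1 / α₀) * a) * c with hfL
  set fR : ℝ → ℝ := fun a => -(a / (α₀ - αc * a)) * c with hfR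
  set g : ℝ → ℝ := fun x => if x ≤ 0 then ((α₀ - 1 / α₀) * x - 1 / α₀) * c
        else -(α₀ / (α₀ - αc * x) ^ 2) * c with hg
  have hα0' : α₀ ≠ 0 := ne_of_gt hα0
  -- derivative of the left piece
  have hL : ∀ a : ℝ, HasDerivAt fL (((α₀ - 1 / α₀) * a - 1 / α₀) * c) a := by
    intro a
    have h1 : HasDerivAt (fun x : ℝ => x ^ 2) (2 * a) a := by
      simpa using hasDerivAt_pow 2 a
    have h2 := ((h1.const_mul (α₀ / 2 - 1 / (2 * α₀))).sub
      ((hasDerivAt_id a).const_mul (1 / α₀))).mul_const c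
    refine h2.congr_deriv ?_
    field_simp
  -- derivative of the right piece
  have hR : ∀ a : ℝ, α₀ - αc * a ≠ 0 → HasDerivAt fR (-(α₀ / (α₀ - αc * a) ^ 2) * c) a := by
    intro a ha
    have hden : HasDerivAt (fun x : ℝ => α₀ - αc * x) (-αc) a := by
      simpa using ((hasDerivAt_id a).const_mul αc).const_sub α₀
    have h2 := (((hasDerivAt_id a).div hden ha).neg).mul_const c
    refine h2.congr_deriv ?_
    field_simp
    rw [id_eq]
    ring
  -- derivative of f on (-1,1)
  have hd : ∀ x ∈ Set.Ioo (-1 : ℝ) 1, HasDerivAt f (g x) x := by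
    intro x hx
    rcases lt_trichotomy x 0 with hx0 | hx0 | hx0
    · have hev : f =ᶠ[nhds x] fL := by
        filter_upwards [Iio_mem_nhds hx0] with y hy
        have hy' : y ≤ 0 := le_of_lt (Set.mem_Iio.mp hy)
        simp only [hf, hfL]
        rw [if_pos hy']
      rw [hg]
      simp only [if_pos hx0.le]
      exact (hL x).congr_of_eventuallyEq hev
    · subst hx0
      have hne : α₀ - αc * 0 ≠ 0 := by simpa using hα0'
      have hIic : HasDerivWithinAt f (((α₀ - 1 / α₀) * 0 - 1 / α₀) * c) (Set.Iic 0) 0 := by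
        refine ((hL 0).hasDerivWithinAt).congr (fun y hy => ?_) ?_
        · simp [hf, hfL, if_pos (Set.mem_Iic.mp hy)]
        · simp [hf, hfL]
      have hIci : HasDerivWithinAt f (((α₀ - 1 / α₀) * 0 - 1 / α₀) * c) (Set.Ici 0) 0 := by
        have hval : -(α₀ / (α₀ - αc * 0) ^ 2) * c = ((α₀ - 1 / α₀) * 0 - 1 / α₀) * c := by
          field_simp
          ring
        have h1 := ((hR 0 hne).hasDerivWithinAt (s := Set.Ici 0))
        rw [hval] at h1
        refine h1.congr (fun y hy => ?_) ?_
        · rcases eq_or_lt_of_le (Set.mem_Ici.mp hy) with h | h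
          · simp [hf, hfR, ← h]
          · simp [hf, hfR, if_neg (not_le.mpr h)]
        · simp [hf, hfR]
      have := hIic.union hIci
      rw [Set.Iic_union_Ici] at this
      rw [hg]
      simp only [le_refl, if_pos]
      exact hasDerivWithinAt_univ.mp this
    · have hne : α₀ - αc * x ≠ 0 := by nlinarith [hx.2]
      have hev : f =ᶠ[nhds x] fR := by
        filter_upwards [Ioi_mem_nhds hx0] with y hy
        have hy' : ¬ y ≤ 0 := not_le.mpr (Set.mem_Ioi.mp hy)
        simp only [hf, hfR]
        rw [if_neg hy']
      rw [hg]
      simp only [if_neg (not_le.mpr hx0)]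
      exact (hR x hne).congr_of_eventuallyEq hev
  -- continuity of f on [-1,1]
  have hcont : ContinuousOn f (Set.Icc (-1 : ℝ) 1) := by
    intro x hx
    rcases lt_trichotomy x 0 with hx0 | hx0 | hx0
    · have hev : f =ᶠ[nhds x] fL := by
        filter_upwards [Iio_mem_nhds hx0] with y hy
        have hy' : y ≤ 0 := le_of_lt (Set.mem_Iio.mp hy)
        simp only [hf, hfL]
        rw [if_pos hy']
      exact ((hL x).continuousAt.congr hev.symm).continuousWithinAt
    · subst hx0
      exact (hd 0 (by norm_num)).continuousAt.continuousWithinAt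
    · have hne : α₀ - αc * x ≠ 0 := by nlinarith [hx.2]
      have hev : f =ᶠ[nhds x] fR := by
        filter_upwards [Ioi_mem_nhds hx0] with y hy
        have hy' : ¬ y ≤ 0 := not_le.mpr (Set.mem_Ioi.mp hy)
        simp only [hf, hfR]
        rw [if_neg hy']
      exact ((hR x hne).continuousAt.congr hev.symm).continuousWithinAt
  -- strict antitonicity of the derivative
  have hanti : StrictAntiOn (deriv f) (interior (Set.Icc (-1 : ℝ) 1)) := by
    rw [interior_Icc]
    intro x hx y hy hxy
    rw [(hd x hx).deriv, (hd y hy).deriv, hg]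
    have hi : 1 < 1 / α₀ := by rw [lt_div_iff₀ hα0]; linarith
    have hneg : α₀ - 1 / α₀ < 0 := by linarith
    by_cases hy0 : y ≤ 0
    · have hx0 : x ≤ 0 := le_trans hxy.le hy0
      simp only [if_pos hx0, if_pos hy0]
      have key : (α₀ - 1 / α₀) * ((y - x) * c) < 0 :=
        mul_neg_of_neg_of_pos hneg (mul_pos (by linarith) hc)
      nlinarith [key]
    · push_neg at hy0
      have hdy0 : 0 < α₀ - αc * y := by nlinarith [hy.2]
      have hdyα : α₀ - αc * y < α₀ := by nlinarith
      simp only [if_neg (not_le.mpr hy0)]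
      by_cases hx0 : x ≤ 0
      · simp only [if_pos hx0]
        have h1 : 1 / α₀ < α₀ / (α₀ - αc * y) ^ 2 := by
          rw [div_lt_div_iff₀ hα0 (by positivity)]
          nlinarith
        have h2 : 0 ≤ (α₀ - 1 / α₀) * x := by nlinarith
        nlinarith [mul_lt_mul_of_pos_right h1 hc, mul_nonneg h2 hc.le]
      · push_neg at hx0
        simp only [if_neg (not_le.mpr hx0)]
        have hdx0 : 0 < α₀ - αc * x := by nlinarith [hx.2]
        have hdd : α₀ - αc * y < α₀ - αc * x := by nlinarith
        have h1 : α₀ / (α₀ - αc * x) ^ 2 < α₀ / (α₀ - αc * y) ^ 2 := by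
          apply div_lt_div_of_pos_left hα0 (by positivity)
          nlinarith
        nlinarith [mul_lt_mul_of_pos_right h1 hc]
  exact hanti.strictConcaveOn_of_deriv (convex_Icc _ _) hcont
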